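/- Volumes of balls according to approximate unitary expanders (moment form): Let ν be a probability measure on U(d), let k ≥ 1 be a natural number, let δ ≥ 0, and suppose that for every V ∈ U(d) one has ∫ |tr(U·Vᴴ)|^{2k} dν(U) ≤ k! + d^{2k}·δ (this hypothesis holds when ν is a δ-approximate unitary k-expander). Then for every V ∈ U(d) and every ε ∈ (0,1): ν(B(V,ε)) ≤ (k! + d^{2k}·δ) / (d^{2k}·(1−ε²)^k). -/

import Mathlib

open MeasureTheory
open scoped ENNReal Matrix InnerProductSpace

namespace Paper

noncomputable section

instance matMS (d : ℕ) : MeasurableSpace (Matrix (Fin d) (Fin d) ℂ) := borel _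
instance matBS (d : ℕ) : BorelSpace (Matrix (Fin d) (Fin d) ℂ) := ⟨rfl⟩

/-- The unitary group `U(d)`. -/
abbrev UG (d : ℕ) := Matrix.unitaryGroup (Fin d) ℂ

/-- ℓ²→ℓ² operator norm (spectral norm) of a matrix. -/
def opNorm {d : ℕ} (A : Matrix (Fin d) (Fin d) ℂ) : ℝ :=
  ‖Matrix.toEuclideanCLM (𝕜 := ℂ) A‖

/-- Phase-invariant distance on unitary channels. -/
def D {d : ℕ} (U V : UG d) : ℝ :=
  ⨅ z : {z : ℂ // ‖z‖ = 1},
    opNorm ((U : Matrix (Fin d) (Fin d) ℂ) - z.val • (V : Matrix (Fin d) (Fin d) ℂ))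

/-- Closed ball of radius `r` around `V` in `U(d)` for the distance `D`. -/
def ball {d : ℕ} (V : UG d) (r : ℝ) : Set (UG d) := {U | D U V ≤ r}

/-- Haar volume of a ball of radius `r`. -/
def Vol {d : ℕ} (μ : Measure (UG d)) (r : ℝ) : ℝ≥0∞ := μ (ball 1 r)

/-- `(α,β)`-equidistribution of `ν` at scale `ε` (relative to the Haar measure `μ`). -/
def Equidistributed {d : ℕ} (μ ν : Measure (UG d)) (α β ε : ℝ) : Prop :=
  ∀ (V : UG d) (r : ℝ), ε ≤ r →
    Vol μ (α * r) ≤ ν (ball V r) ∧ ν (ball V r) ≤ Vol μ (β * r)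

/-- Products of at most `r` elements of the gate set `𝒢`. -/
def wordsLe {d : ℕ} (𝒢 : Finset (UG d)) (r : ℕ) : Set (UG d) :=
  {W | ∃ l : List (UG d), l.length ≤ r ∧ (∀ g ∈ l, g ∈ 𝒢) ∧ l.prod = W}

/-- Convolution of two measures on a monoid: pushforward of the product measure under
multiplication. -/
def mconv {G : Type*} [Monoid G] [MeasurableSpace G] (ν ϑ : Measure G) : Measure G :=
  (ν.prod ϑ).map (fun p => p.1 * p.2)

/-- `t`-fold convolution power of a measure. -/
def convPow {G : Type*} [Monoid G] [MeasurableSpace G] (ν : Measure G) : ℕ → Measure G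
  | 0 => Measure.dirac 1
  | n + 1 => mconv (convPow ν n) ν

/-- The random walk `U_t = V_t ⋯ V_1`. -/
def walk {d : ℕ} {Ω : Type*} (V : ℕ → Ω → UG d) (t : ℕ) (ω : Ω) : UG d :=
  ((List.range t).map (fun i => V (t - i) ω)).prod

/-- Euclidean space `ℂ^d`. -/
abbrev EV (d : ℕ) := EuclideanSpace ℂ (Fin d)

instance evMS (d : ℕ) : MeasurableSpace (EV d) := borel _
instance evBS (d : ℕ) : BorelSpace (EV d) := ⟨rfl⟩

/-- Distance on pure states. -/
def dS {d : ℕ} (ψ φ : EV d) : ℝ := Real.sqrt (1 - ‖⟪ψ, φ⟫_ℂ‖ ^ 2)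

/-- Ball of radius `r` around the state `φ`, inside the set of unit vectors. -/
def ballS {d : ℕ} (φ : EV d) (r : ℝ) : Set (EV d) := {ψ | ‖ψ‖ = 1 ∧ dS ψ φ ≤ r}

/-- Action of a unitary matrix on a vector. -/
def act {d : ℕ} (U : UG d) (ψ : EV d) : EV d :=
  Matrix.toEuclideanLin (U : Matrix (Fin d) (Fin d) ℂ) ψ

/-- Topological support of a measure. -/
def msupport {X : Type*} [TopologicalSpace X] [MeasurableSpace X] (ν : Measure X) : Set X :=
  {x | ∀ U : Set X, IsOpen U → x ∈ U → ν U ≠ 0}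

/-- Packing number (as an extended nonnegative real): supremum of cardinalities of finite
subsets of `Y` whose elements are pairwise at `dist`-distance at least `ε`. -/
def Npack {X : Type*} (dist : X → X → ℝ) (Y : Set X) (ε : ℝ) : ℝ≥0∞ :=
  ⨆ (S : Finset X) (_ : ↑S ⊆ Y ∧ (S : Set X).Pairwise fun x y => ε ≤ dist x y),
    (S.card : ℝ≥0∞)

end
end Paper

namespace Paper
open ProbabilityTheory

lemma inner_clm_single {d : ℕ} (A B : Matrix (Fin d) (Fin d) ℂ) (i : Fin d) :
    ⟪Matrix.toEuclideanCLM (𝕜 := ℂ) A (EuclideanSpace.single i 1),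
     Matrix.toEuclideanCLM (𝕜 := ℂ) B (EuclideanSpace.single i 1)⟫_ℂ = (Aᴴ * B) i i := by
  rw [PiLp.inner_apply]
  have hA : ∀ j, (Matrix.toEuclideanCLM (𝕜 := ℂ) A (EuclideanSpace.single i 1)) j = A j i := by
    intro j
    rw [show (EuclideanSpace.single i (1:ℂ)) = (WithLp.equiv 2 _).symm (Pi.single i 1) from rfl,
      Matrix.ofLp_toEuclideanCLM]
    simp [Matrix.toLin'_apply, Matrix.mulVec_single]
  have hB : ∀ j, (Matrix.toEuclideanCLM (𝕜 := ℂ) B (EuclideanSpace.single i 1)) j = B j i := by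
    intro j
    rw [show (EuclideanSpace.single i (1:ℂ)) = (WithLp.equiv 2 _).symm (Pi.single i 1) from rfl,
      Matrix.ofLp_toEuclideanCLM]
    simp [Matrix.toLin'_apply, Matrix.mulVec_single]
  simp only [hA, hB, RCLike.inner_apply, Matrix.mul_apply, Matrix.conjTranspose_apply]
  exact Finset.sum_congr rfl fun j _ => mul_comm _ _

lemma norm_clm_single {d : ℕ} (U : UG d) (i : Fin d) :
    ‖Matrix.toEuclideanCLM (𝕜 := ℂ) (U : Matrix (Fin d) (Fin d) ℂ)
      (EuclideanSpace.single i 1)‖ = 1 := by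
  have h1 : ((U : Matrix (Fin d) (Fin d) ℂ)ᴴ * (U : Matrix (Fin d) (Fin d) ℂ)) = 1 := by
    have := U.2.1
    rwa [Matrix.star_eq_conjTranspose] at this
  have h2 := inner_clm_single (U : Matrix (Fin d) (Fin d) ℂ) (U : Matrix (Fin d) (Fin d) ℂ) i
  rw [h1, Matrix.one_apply_eq] at h2
  have h3 : ‖Matrix.toEuclideanCLM (𝕜 := ℂ) (U : Matrix (Fin d) (Fin d) ℂ)
      (EuclideanSpace.single i 1)‖ ^ 2 = 1 := by
    rw [← inner_self_eq_norm_sq (𝕜 := ℂ), h2]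
    simp
  nlinarith [norm_nonneg (Matrix.toEuclideanCLM (𝕜 := ℂ) (U : Matrix (Fin d) (Fin d) ℂ)
      (EuclideanSpace.single i 1))]

lemma trace_lower {d : ℕ} (U V : UG d) (z : ℂ) (hz : ‖z‖ = 1) :
    (d : ℝ) * (1 - opNorm ((U : Matrix (Fin d) (Fin d) ℂ)
        - z • (V : Matrix (Fin d) (Fin d) ℂ)) ^ 2 / 2)
      ≤ ‖Matrix.trace ((U : Matrix (Fin d) (Fin d) ℂ) * (V : Matrix (Fin d) (Fin d) ℂ)ᴴ)‖ := by
  set Um := (U : Matrix (Fin d) (Fin d) ℂ)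
  set Vm := (V : Matrix (Fin d) (Fin d) ℂ)
  set a := opNorm (Um - z • Vm) with ha
  have key : ∀ i : Fin d, 1 - a ^ 2 / 2 ≤ (z * ((Umᴴ * Vm) i i)).re := by
    intro i
    set ψ : EuclideanSpace ℂ (Fin d) := EuclideanSpace.single i 1 with hψdef
    have hψ : ‖ψ‖ = 1 := by simp [hψdef]
    set x := Matrix.toEuclideanCLM (𝕜 := ℂ) Um ψ
    set y := Matrix.toEuclideanCLM (𝕜 := ℂ) Vm ψ
    have hx : ‖x‖ = 1 := norm_clm_single U i
    have hy : ‖y‖ = 1 := norm_clm_single V i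
    have hxy : ⟪x, y⟫_ℂ = (Umᴴ * Vm) i i := inner_clm_single Um Vm i
    have h1 : ‖Matrix.toEuclideanCLM (𝕜 := ℂ) (Um - z • Vm) ψ‖ ≤ a := by
      calc ‖Matrix.toEuclideanCLM (𝕜 := ℂ) (Um - z • Vm) ψ‖
          ≤ ‖Matrix.toEuclideanCLM (𝕜 := ℂ) (Um - z • Vm)‖ * ‖ψ‖ :=
            ContinuousLinearMap.le_opNorm _ _
        _ = a := by rw [hψ, mul_one]; rfl
    have h2 : Matrix.toEuclideanCLM (𝕜 := ℂ) (Um - z • Vm) ψ = x - z • y := by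
      simp [x, y, map_sub, _root_.map_smul]
    have h3 : ‖x - z • y‖ ^ 2 =
        ‖x‖ ^ 2 - 2 * RCLike.re ⟪x, z • y⟫_ℂ + ‖z • y‖ ^ 2 := norm_sub_sq (𝕜 := ℂ) x (z • y)
    have h4 : ⟪x, z • y⟫_ℂ = z * ⟪x, y⟫_ℂ := inner_smul_right x y z
    have h5 : ‖z • y‖ = 1 := by rw [norm_smul, hz, hy, mul_one]
    have h6 : ‖x - z • y‖ ^ 2 ≤ a ^ 2 := by
      rw [← h2]
      have := norm_nonneg (Matrix.toEuclideanCLM (𝕜 := ℂ) (Um - z • Vm) ψ)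
      nlinarith
    rw [h3, hx, h5, h4, hxy] at h6
    have : RCLike.re (z * ((Umᴴ * Vm) i i)) = (z * ((Umᴴ * Vm) i i)).re := rfl
    nlinarith [h6]
  have hsum : (d : ℝ) * (1 - a ^ 2 / 2) ≤ (z * Matrix.trace (Umᴴ * Vm)).re := by
    have : (z * Matrix.trace (Umᴴ * Vm)).re = ∑ i, (z * ((Umᴴ * Vm) i i)).re := by
      rw [Matrix.trace, Finset.mul_sum, Complex.re_sum]
      rfl
    rw [this]
    calc (d : ℝ) * (1 - a ^ 2 / 2) = ∑ _i : Fin d, (1 - a ^ 2 / 2) := by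
          rw [Finset.sum_const, Finset.card_univ, Fintype.card_fin, nsmul_eq_mul]
      _ ≤ ∑ i, (z * ((Umᴴ * Vm) i i)).re := Finset.sum_le_sum fun i _ => key i
  have hre : (z * Matrix.trace (Umᴴ * Vm)).re ≤ ‖Matrix.trace (Um * Vmᴴ)‖ := by
    have h7 : Matrix.trace (Umᴴ * Vm) = star (Matrix.trace (Um * Vmᴴ)) := by
      rw [← Matrix.trace_conjTranspose, Matrix.conjTranspose_mul,
        Matrix.conjTranspose_conjTranspose, Matrix.trace_mul_comm]
    calc (z * Matrix.trace (Umᴴ * Vm)).re ≤ ‖z * Matrix.trace (Umᴴ * Vm)‖ := Complex.re_le_norm _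
      _ = ‖z‖ * ‖Matrix.trace (Umᴴ * Vm)‖ := norm_mul _ _
      _ = ‖Matrix.trace (Um * Vmᴴ)‖ := by rw [hz, one_mul, h7, norm_star]
  linarith

lemma trace_lower_ball {d : ℕ} (hd0 : 0 < (d : ℝ)) (U V : UG d) (ε : ℝ) (hε : 0 ≤ ε)
    (hU : U ∈ ball V ε) :
    (d : ℝ) * (1 - ε ^ 2 / 2)
      ≤ ‖Matrix.trace ((U : Matrix (Fin d) (Fin d) ℂ) * (V : Matrix (Fin d) (Fin d) ℂ)ᴴ)‖ := by
  set Tn := ‖Matrix.trace ((U : Matrix (Fin d) (Fin d) ℂ)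
    * (V : Matrix (Fin d) (Fin d) ℂ)ᴴ)‖ with hTn
  set s : ℝ := 2 - 2 * Tn / d with hs
  have hD : D U V ≤ ε := hU
  have hinf : Real.sqrt s ≤ D U V := by
    have : Nonempty {z : ℂ // ‖z‖ = 1} := ⟨⟨1, norm_one⟩⟩
    refine le_ciInf fun z => ?_
    have h1 := trace_lower U V z.val z.property
    have h2 : s ≤ opNorm ((U : Matrix (Fin d) (Fin d) ℂ)
        - z.val • (V : Matrix (Fin d) (Fin d) ℂ)) ^ 2 := by
      have hd' : (d:ℝ) ≠ 0 := ne_of_gt hd0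
      rw [hs]
      nlinarith [h1, hd0, div_mul_cancel₀ (2 * Tn) hd']
    calc Real.sqrt s ≤ Real.sqrt (opNorm ((U : Matrix (Fin d) (Fin d) ℂ)
          - z.val • (V : Matrix (Fin d) (Fin d) ℂ)) ^ 2) := Real.sqrt_le_sqrt h2
      _ = opNorm _ := Real.sqrt_sq (norm_nonneg _)
  have hsε : Real.sqrt s ≤ ε := le_trans hinf hD
  have hs2 : s ≤ ε ^ 2 := (Real.sqrt_le_left hε).mp hsε
  rw [hs] at hs2
  have hd' : (d:ℝ) ≠ 0 := ne_of_gt hd0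
  nlinarith [hs2, hd0, div_mul_cancel₀ (2 * Tn) hd']


theorem stmt2 {d : ℕ} (hd : 2 ≤ d) (ν : Measure (UG d)) [IsProbabilityMeasure ν]
    (k : ℕ) (hk : 1 ≤ k) (δ : ℝ) (hδ : 0 ≤ δ)
    (hmom : ∀ V : UG d,
      ∫⁻ U, ENNReal.ofReal
          (‖Matrix.trace ((U : Matrix (Fin d) (Fin d) ℂ) *
              (V : Matrix (Fin d) (Fin d) ℂ)ᴴ)‖ ^ (2 * k)) ∂ν
        ≤ ENNReal.ofReal ((k.factorial : ℝ) + (d : ℝ) ^ (2 * k) * δ)) :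
    ∀ (V : UG d) (ε : ℝ), 0 < ε → ε < 1 →
      ν (ball V ε) ≤ ENNReal.ofReal
        (((k.factorial : ℝ) + (d : ℝ) ^ (2 * k) * δ) /
          ((d : ℝ) ^ (2 * k) * (1 - ε ^ 2) ^ k)) := by
  intro V ε hε0 hε1
  have hd0 : (0:ℝ) < d := by
    have : (0:ℕ) < d := lt_of_lt_of_le (by norm_num) hd
    exact_mod_cast this
  set M := (k.factorial : ℝ) + (d : ℝ) ^ (2 * k) * δ with hM
  set c := (d : ℝ) ^ (2 * k) * (1 - ε ^ 2) ^ k with hc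
  have h1ε : (0:ℝ) < 1 - ε ^ 2 := by nlinarith
  have hc0 : 0 < c := mul_pos (pow_pos hd0 _) (pow_pos h1ε _)
  have hpt : ∀ U ∈ ball V ε, c ≤ ‖Matrix.trace ((U : Matrix (Fin d) (Fin d) ℂ)
      * (V : Matrix (Fin d) (Fin d) ℂ)ᴴ)‖ ^ (2 * k) := by
    intro U hU
    have h1 := trace_lower_ball hd0 U V ε hε0.le hU
    set Tn := ‖Matrix.trace ((U : Matrix (Fin d) (Fin d) ℂ)
      * (V : Matrix (Fin d) (Fin d) ℂ)ᴴ)‖ with hTn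
    have hTn0 : (0:ℝ) ≤ Tn := norm_nonneg _
    have hL : (0:ℝ) ≤ (d:ℝ) * (1 - ε ^ 2 / 2) := by nlinarith
    have h2 : (d:ℝ) ^ 2 * (1 - ε ^ 2) ≤ Tn ^ 2 := by
      nlinarith [h1, hTn0, hL, sq_nonneg ((d:ℝ) * ε ^ 2),
        mul_nonneg (sub_nonneg.2 h1) (by linarith : (0:ℝ) ≤ Tn + (d:ℝ) * (1 - ε ^ 2 / 2))]
    calc c = ((d:ℝ) ^ 2 * (1 - ε ^ 2)) ^ k := by
          rw [hc, mul_pow, ← pow_mul]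
      _ ≤ (Tn ^ 2) ^ k := pow_le_pow_left₀ (by positivity) h2 k
      _ = Tn ^ (2 * k) := by rw [← pow_mul]
  haveI : OpensMeasurableSpace (UG d) :=
    Subtype.opensMeasurableSpace {x : Matrix (Fin d) (Fin d) ℂ | x ∈ Matrix.unitaryGroup (Fin d) ℂ}
  have hmeas : Measurable (fun U : UG d => ENNReal.ofReal
      (‖Matrix.trace ((U : Matrix (Fin d) (Fin d) ℂ)
        * (V : Matrix (Fin d) (Fin d) ℂ)ᴴ)‖ ^ (2 * k))) := by
    apply Continuous.measurable
    apply ENNReal.continuous_ofReal.comp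
    apply Continuous.pow
    apply Continuous.norm
    exact (Continuous.matrix_mul continuous_subtype_val continuous_const).matrix_trace
  have hmarkov := mul_meas_ge_le_lintegral₀ (μ := ν) hmeas.aemeasurable (ENNReal.ofReal c)
  have hsub : ball V ε ⊆ {U : UG d | ENNReal.ofReal c ≤ ENNReal.ofReal
      (‖Matrix.trace ((U : Matrix (Fin d) (Fin d) ℂ)
        * (V : Matrix (Fin d) (Fin d) ℂ)ᴴ)‖ ^ (2 * k))} :=
    fun U hU => ENNReal.ofReal_le_ofReal (hpt U hU)
  have h3 : ENNReal.ofReal c * ν (ball V ε) ≤ ENNReal.ofReal M :=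
    le_trans (mul_le_mul_right (measure_mono hsub) _) (le_trans hmarkov (hmom V))
  rw [ENNReal.ofReal_div_of_pos hc0,
    ENNReal.le_div_iff_mul_le (Or.inl (ENNReal.ofReal_pos.mpr hc0).ne')
      (Or.inl ENNReal.ofReal_ne_top)]
  rwa [mul_comm]


end Paper
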